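/- Two edges of a Euclidean minimum spanning tree incident to the same vertex form an angle greater than π/3; consequently the maximal degree of any vertex in a planar EMST is at most 6 (in fact less than 6, i.e., at most 5 for distinct points, but at most 6 suffices). -/

import Mathlib

open Finset
open scoped Classical


private lemma connected_of_adj_reachable {V : Type*} {G H : SimpleGraph V}
    (hG : G.Connected) (h : ∀ a b, G.Adj a b → H.Reachable a b) : H.Connected := by
  rw [SimpleGraph.connected_iff] at hG ⊢
  refine ⟨fun a b => ?_, hG.2⟩
  obtain ⟨p⟩ := hG.1 a b
  induction p with
  | nil => exact SimpleGraph.Reachable.refl _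
  | cons hadj _ ih => exact (h _ _ hadj).trans ih

private lemma dist_lt_of_angle_lt {u v w : EuclideanSpace ℝ (Fin 2)}
    (huv : u ≠ v) (hwv : w ≠ v) (hle : dist v u ≤ dist v w)
    (hang : EuclideanGeometry.angle u v w < Real.pi / 3) :
    dist u w < dist v w := by
  have hcos : (1 : ℝ) / 2 < Real.cos (EuclideanGeometry.angle u v w) := by
    rw [← Real.cos_pi_div_three]
    exact Real.cos_lt_cos_of_nonneg_of_le_pi (EuclideanGeometry.angle_nonneg _ _ _)
      (by linarith [Real.pi_pos]) hang
  have hlaw := EuclideanGeometry.law_cos u v w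
  have h1 : 0 < dist u v := dist_pos.2 huv
  have h2 : 0 < dist v w := dist_pos.2 (Ne.symm hwv)
  have h3 : dist u v = dist v u := dist_comm _ _
  have h4 : dist w v = dist v w := dist_comm _ _
  have hle' : dist u v ≤ dist v w := h3 ▸ hle
  have e1 : dist u v * dist v w < 2 * dist u v * dist v w *
      Real.cos (EuclideanGeometry.angle u v w) := by nlinarith [mul_pos h1 h2]
  have e2 : dist u v * dist u v ≤ dist u v * dist v w :=
    mul_le_mul_of_nonneg_left hle' h1.le
  rw [h4] at hlaw
  have hsq : dist u w * dist u w < dist v w * dist v w := by linarith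
  by_contra hcon
  push_neg at hcon
  exact absurd hsq (not_lt.2 (mul_le_mul hcon hcon dist_nonneg dist_nonneg))

/-- The total Euclidean length of the edges of a graph on a finite point set `P`
in the plane. -/
noncomputable def emstWeight (P : Finset (EuclideanSpace ℝ (Fin 2)))
    (G : SimpleGraph P) : ℝ :=
  ∑ e ∈ Finset.univ.filter (fun e : Sym2 P => e ∈ G.edgeSet),
    Sym2.lift ⟨fun (a b : P) => dist (a : EuclideanSpace ℝ (Fin 2))
      (b : EuclideanSpace ℝ (Fin 2)), fun a b => dist_comm _ _⟩ e

private lemma emst_swap {P : Finset (EuclideanSpace ℝ (Fin 2))}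
    {T : SimpleGraph P} (hconn : T.Connected)
    (hmin : ∀ T' : SimpleGraph P, T'.Connected → emstWeight P T ≤ emstWeight P T')
    {v u w : P} (hvu : T.Adj v u) (hvw : T.Adj v w) (huw : u ≠ w)
    (hle : dist (v : EuclideanSpace ℝ (Fin 2)) (u : EuclideanSpace ℝ (Fin 2)) ≤
      dist (v : EuclideanSpace ℝ (Fin 2)) (w : EuclideanSpace ℝ (Fin 2)))
    (hang : EuclideanGeometry.angle (u : EuclideanSpace ℝ (Fin 2))
      (v : EuclideanSpace ℝ (Fin 2)) (w : EuclideanSpace ℝ (Fin 2)) < Real.pi / 3) :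
    False := by
  classical
  have huv' : (u : EuclideanSpace ℝ (Fin 2)) ≠ (v : EuclideanSpace ℝ (Fin 2)) :=
    Subtype.coe_ne_coe.2 hvu.ne'
  have hwv' : (w : EuclideanSpace ℝ (Fin 2)) ≠ (v : EuclideanSpace ℝ (Fin 2)) :=
    Subtype.coe_ne_coe.2 hvw.ne'
  have hlt : dist (u : EuclideanSpace ℝ (Fin 2)) (w : EuclideanSpace ℝ (Fin 2)) <
      dist (v : EuclideanSpace ℝ (Fin 2)) (w : EuclideanSpace ℝ (Fin 2)) :=
    dist_lt_of_angle_lt huv' hwv' hle hang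
  set euw : Sym2 P := s(u, w) with heuw
  set evw : Sym2 P := s(v, w) with hevw
  have hne2 : s(v, u) ≠ evw := by
    rw [hevw]
    intro h
    rcases Sym2.eq_iff.1 h with ⟨-, h2⟩ | ⟨h1, -⟩
    · exact huw h2
    · exact hvw.ne h1
  set T' : SimpleGraph P := SimpleGraph.fromEdgeSet (insert euw (T.edgeSet \ {evw})) with hT'
  have hT'vu : T'.Adj v u := by
    rw [hT', SimpleGraph.fromEdgeSet_adj]
    exact ⟨Set.mem_insert_iff.2 (Or.inr ⟨T.mem_edgeSet.2 hvu, hne2⟩), hvu.ne⟩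
  have hT'uw : T'.Adj u w := by
    rw [hT', SimpleGraph.fromEdgeSet_adj]
    exact ⟨Set.mem_insert _ _, huw⟩
  have hT'conn : T'.Connected := by
    refine connected_of_adj_reachable hconn fun a b hab => ?_
    by_cases h : s(a, b) = evw
    · rw [hevw, Sym2.eq_iff] at h
      rcases h with ⟨ha, hb⟩ | ⟨ha, hb⟩
      · subst ha; subst hb; exact hT'vu.reachable.trans hT'uw.reachable
      · subst ha; subst hb; exact (hT'vu.reachable.trans hT'uw.reachable).symm
    · have : T'.Adj a b := by
        rw [hT', SimpleGraph.fromEdgeSet_adj]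
        exact ⟨Set.mem_insert_iff.2 (Or.inr ⟨T.mem_edgeSet.2 hab, h⟩), hab.ne⟩
      exact this.reachable
  -- weights
  set f : Sym2 P → ℝ := Sym2.lift ⟨fun (a b : P) => dist (a : EuclideanSpace ℝ (Fin 2))
      (b : EuclideanSpace ℝ (Fin 2)), fun a b => dist_comm _ _⟩ with hf
  have hfnonneg : ∀ e, 0 ≤ f e := by
    intro e
    induction e using Sym2.ind with
    | _ a b => rw [hf, Sym2.lift_mk]; exact dist_nonneg
  have hW : ∀ G : SimpleGraph P,
      emstWeight P G = ∑ e ∈ Finset.univ.filter (fun e : Sym2 P => e ∈ G.edgeSet), f e :=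
    fun _ => rfl
  set S := Finset.univ.filter (fun e : Sym2 P => e ∈ T.edgeSet) with hS
  set S' := Finset.univ.filter (fun e : Sym2 P => e ∈ T'.edgeSet) with hS'def
  have hS' : S' = insert euw (S.erase evw) := by
    ext e
    simp only [hS'def, hS, Finset.mem_filter, Finset.mem_univ, true_and, hT',
      SimpleGraph.edgeSet_fromEdgeSet, Set.mem_diff, Set.mem_insert_iff,
      Set.mem_singleton_iff, Set.mem_setOf_eq, Finset.mem_insert, Finset.mem_erase]
    constructor
    · rintro ⟨h1 | ⟨h1, h2⟩, -⟩
      · exact Or.inl h1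
      · exact Or.inr ⟨h2, h1⟩
    · rintro (rfl | ⟨h2, h1⟩)
      · refine ⟨Or.inl rfl, ?_⟩
        rw [heuw]
        simpa [Sym2.mk_isDiag_iff] using huw
      · exact ⟨Or.inr ⟨h1, h2⟩, T.not_isDiag_of_mem_edgeSet h1⟩
  have hevwS : evw ∈ S := Finset.mem_filter.2 ⟨Finset.mem_univ _, T.mem_edgeSet.2 hvw⟩
  have hsum_erase : ∑ e ∈ S.erase evw, f e = (∑ e ∈ S, f e) - f evw :=
    Finset.sum_erase_eq_sub hevwS
  have hfeuw : f euw = dist (u : EuclideanSpace ℝ (Fin 2)) (w : EuclideanSpace ℝ (Fin 2)) := by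
    rw [hf, heuw, Sym2.lift_mk]
  have hfevw : f evw = dist (v : EuclideanSpace ℝ (Fin 2)) (w : EuclideanSpace ℝ (Fin 2)) := by
    rw [hf, hevw, Sym2.lift_mk]
  have hWT' : emstWeight P T' ≤ f euw + ((∑ e ∈ S, f e) - f evw) := by
    rw [hW T', ← hS'def, hS']
    by_cases hm : euw ∈ S.erase evw
    · rw [Finset.insert_eq_self.2 hm, hsum_erase]
      linarith [hfnonneg euw]
    · rw [Finset.sum_insert hm, hsum_erase]
  have hmin' := hmin T' hT'conn
  rw [hW T, ← hS] at hmin'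
  rw [hfeuw, hfevw] at hWT'
  linarith

/-- Let `T` be a Euclidean minimum spanning tree of a finite set `P` of distinct points
in the plane: a connected graph on `P` of minimum total Euclidean edge length among all
connected spanning graphs.  Then any two edges of `T` incident to a common vertex `v`
make an angle at least `π/3` at `v`, and consequently every vertex of `T` has at
most `6` neighbors. -/
theorem emst_angle_ge_and_degree_le
    (P : Finset (EuclideanSpace ℝ (Fin 2)))
    (T : SimpleGraph P)
    (hconn : T.Connected)
    (hmin : ∀ T' : SimpleGraph P, T'.Connected → emstWeight P T ≤ emstWeight P T') :
    (∀ v u w : P, T.Adj v u → T.Adj v w → u ≠ w →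
      Real.pi / 3 ≤ EuclideanGeometry.angle (u : EuclideanSpace ℝ (Fin 2))
        (v : EuclideanSpace ℝ (Fin 2)) (w : EuclideanSpace ℝ (Fin 2))) ∧
    (∀ v : P, (Finset.univ.filter (fun u : P => T.Adj v u)).card ≤ 6) := by
  classical
  have part1 : ∀ v u w : P, T.Adj v u → T.Adj v w → u ≠ w →
      Real.pi / 3 ≤ EuclideanGeometry.angle (u : EuclideanSpace ℝ (Fin 2))
        (v : EuclideanSpace ℝ (Fin 2)) (w : EuclideanSpace ℝ (Fin 2)) := by
    intro v u w hvu hvw huw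
    by_contra hang
    push_neg at hang
    rcases le_total (dist (v : EuclideanSpace ℝ (Fin 2)) (u : EuclideanSpace ℝ (Fin 2)))
        (dist (v : EuclideanSpace ℝ (Fin 2)) (w : EuclideanSpace ℝ (Fin 2))) with h | h
    · exact emst_swap hconn hmin hvu hvw huw h hang
    · exact emst_swap hconn hmin hvw hvu (Ne.symm huw) h
        (by rwa [EuclideanGeometry.angle_comm])
  refine ⟨part1, ?_⟩
  intro v
  by_contra hdeg
  push_neg at hdeg
  letI : Fact (Module.finrank ℝ (EuclideanSpace ℝ (Fin 2)) = 2) := ⟨finrank_euclideanSpace_fin⟩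
  letI : Module.Oriented ℝ (EuclideanSpace ℝ (Fin 2)) (Fin 2) :=
    ⟨Module.Basis.orientation (EuclideanSpace.basisFun (Fin 2) ℝ).toBasis⟩
  have hπ : 0 < Real.pi / 3 := by positivity
  set N := Finset.univ.filter (fun u : P => T.Adj v u) with hN
  obtain ⟨w0, hw0⟩ := Finset.card_pos.1 (show 0 < N.card by omega)
  have hadjN : ∀ n ∈ N, T.Adj v n := fun n hn => (Finset.mem_filter.1 hn).2
  have hnev : ∀ n ∈ N, (n : EuclideanSpace ℝ (Fin 2)) ≠ (v : EuclideanSpace ℝ (Fin 2)) :=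
    fun n hn => Subtype.coe_ne_coe.2 (hadjN n hn).ne'
  set g : P → ℝ := fun n => (EuclideanGeometry.oangle (w0 : EuclideanSpace ℝ (Fin 2))
      (v : EuclideanSpace ℝ (Fin 2)) (n : EuclideanSpace ℝ (Fin 2))).toReal with hg
  set k : P → ℤ := fun n => ⌈(g n + Real.pi) / (Real.pi / 3)⌉ with hk
  have hgIoc : ∀ n : P, -Real.pi < g n ∧ g n ≤ Real.pi := fun n =>
    ⟨Real.Angle.neg_pi_lt_toReal _, Real.Angle.toReal_le_pi _⟩
  have hmaps : ∀ n ∈ N, k n ∈ Finset.Icc (1 : ℤ) 6 := by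
    intro n _
    obtain ⟨h1, h2⟩ := hgIoc n
    rw [Finset.mem_Icc]
    constructor
    · show (1 : ℤ) ≤ ⌈(g n + Real.pi) / (Real.pi / 3)⌉
      have hx : (0 : ℝ) < (g n + Real.pi) / (Real.pi / 3) :=
        div_pos (by linarith) hπ
      have h0 : (0 : ℤ) < ⌈(g n + Real.pi) / (Real.pi / 3)⌉ :=
        Int.lt_ceil.2 (by push_cast; linarith)
      omega
    · show ⌈(g n + Real.pi) / (Real.pi / 3)⌉ ≤ (6 : ℤ)
      refine Int.ceil_le.2 ?_
      rw [div_le_iff₀ hπ]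
      push_cast
      linarith
  obtain ⟨i, hi, j, hj, hij, hkij⟩ :=
    Finset.exists_ne_map_eq_of_card_lt_of_maps_to
      (show (Finset.Icc (1 : ℤ) 6).card < N.card by
        rw [Int.card_Icc]; norm_num; omega) hmaps
  -- |g j - g i| < π/3
  have hgap : |g j - g i| < Real.pi / 3 := by
    have exi : (g i + Real.pi) / (Real.pi / 3) * (Real.pi / 3) = g i + Real.pi :=
      div_mul_cancel₀ _ hπ.ne'
    have exj : (g j + Real.pi) / (Real.pi / 3) * (Real.pi / 3) = g j + Real.pi :=
      div_mul_cancel₀ _ hπ.ne'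
    have hxi := Int.le_ceil ((g i + Real.pi) / (Real.pi / 3))
    have hxj := Int.le_ceil ((g j + Real.pi) / (Real.pi / 3))
    have hxi1 := Int.ceil_lt_add_one ((g i + Real.pi) / (Real.pi / 3))
    have hxj1 := Int.ceil_lt_add_one ((g j + Real.pi) / (Real.pi / 3))
    have hc : ((k i : ℤ) : ℝ) = ((k j : ℤ) : ℝ) := by exact_mod_cast hkij
    rw [hk] at hc
    simp only at hc
    have h1 : (g i + Real.pi) / (Real.pi / 3) < (g j + Real.pi) / (Real.pi / 3) + 1 := by
      calc (g i + Real.pi) / (Real.pi / 3) ≤ _ := hxi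
        _ < _ := by rw [hc]; exact hxj1
    have h2 : (g j + Real.pi) / (Real.pi / 3) < (g i + Real.pi) / (Real.pi / 3) + 1 := by
      calc (g j + Real.pi) / (Real.pi / 3) ≤ _ := hxj
        _ < _ := by rw [← hc]; exact hxi1
    have m1 := mul_lt_mul_of_pos_right h1 hπ
    have m2 := mul_lt_mul_of_pos_right h2 hπ
    rw [add_mul, one_mul, exi, exj] at m1 m2
    rw [abs_lt]
    constructor <;> linarith
  -- angle i v j = |g j - g i|
  have hiv := hnev i hi
  have hjv := hnev j hj
  have hw0v := hnev w0 hw0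
  have hadd := EuclideanGeometry.oangle_add hiv hw0v hjv
  have hrev : EuclideanGeometry.oangle (i : EuclideanSpace ℝ (Fin 2))
        (v : EuclideanSpace ℝ (Fin 2)) (w0 : EuclideanSpace ℝ (Fin 2)) =
      -EuclideanGeometry.oangle (w0 : EuclideanSpace ℝ (Fin 2))
        (v : EuclideanSpace ℝ (Fin 2)) (i : EuclideanSpace ℝ (Fin 2)) :=
    EuclideanGeometry.oangle_rev _ _ _
  have hoij : EuclideanGeometry.oangle (i : EuclideanSpace ℝ (Fin 2))
      (v : EuclideanSpace ℝ (Fin 2)) (j : EuclideanSpace ℝ (Fin 2)) =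
      ((g j - g i : ℝ) : Real.Angle) := by
    rw [← hadd, hrev, hg]
    simp only
    rw [Real.Angle.coe_sub, Real.Angle.coe_toReal, Real.Angle.coe_toReal]
    abel
  have hpi := Real.pi_pos
  have habs := abs_lt.1 hgap
  have hangle : EuclideanGeometry.angle (i : EuclideanSpace ℝ (Fin 2))
      (v : EuclideanSpace ℝ (Fin 2)) (j : EuclideanSpace ℝ (Fin 2)) = |g j - g i| := by
    rw [EuclideanGeometry.angle_eq_abs_oangle_toReal hiv hjv, hoij,
      Real.Angle.toReal_coe_eq_self_iff.2 ⟨by linarith, by linarith⟩]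
  have := part1 v i j (hadjN i hi) (hadjN j hj) hij
  rw [hangle] at this
  linarith
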